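/- Let X be a hereditary class of graphs all of whose members are bipartite permutation graphs. Then the path number (the number of vertices of a longest, not necessarily induced, path) is unbounded on X while bounded on every proper hereditary subclass of X if and only if X is either the class of all complete bipartite graphs K_{a,b} (a, b ≥ 0) or the class of all linear forests. In other words, complete bipartite graphs and linear forests are the only two minimal hereditary subclasses of bipartite permutation graphs of unbounded path number. -/

import Mathlib

open SimpleGraph

/-- A class of finite graphs, given by a set of graphs on `Fin n` for each `n`. -/
abbrev GClass : Type := ∀ n : ℕ, Set (SimpleGraph (Fin n))

/-- A class is hereditary if it is closed under isomorphism and induced subgraphs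
(i.e. closed under graph embeddings). -/
def Hereditary (X : GClass) : Prop :=
  ∀ (n m : ℕ) (G : SimpleGraph (Fin n)) (H : SimpleGraph (Fin m)),
    G ∈ X n → Nonempty (H ↪g G) → H ∈ X m

/-- A bipartite permutation graph is a letter graph with the path decoder
over some finite alphabet. -/
def IsBPG {V : Type*} [Fintype V] (G : SimpleGraph V) : Prop :=
  ∃ (k : ℕ) (v : Fin (Fintype.card V) ≃ V) (w : Fin (Fintype.card V) → Fin k),
    ∀ i j : Fin (Fintype.card V), i < j →
      (G.Adj (v i) (v j) ↔ (w j : ℕ) = (w i : ℕ) + 1)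

/-- The path number (number of vertices of a longest, not necessarily induced,
path) is bounded on the class `X`. -/
def PathNumBdd (X : GClass) : Prop :=
  ∃ c : ℕ, ∀ n (G : SimpleGraph (Fin n)), G ∈ X n →
    ∀ (u v : Fin n) (p : G.Walk u v), p.IsPath → p.length + 1 ≤ c

/-- `G` is a complete bipartite graph `K_{a,b}` for some `a, b ≥ 0`. -/
def IsCompleteBipartite {V : Type*} (G : SimpleGraph V) : Prop :=
  ∃ a b : ℕ, Nonempty (G ≃g completeBipartiteGraph (Fin a) (Fin b))

/-- A linear forest: every connected component is a path. -/
def IsLinearForest {V : Type*} (G : SimpleGraph V) : Prop :=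
  ∀ c : G.ConnectedComponent, ∃ m, Nonempty (G.induce c.supp ≃g SimpleGraph.pathGraph m)


namespace PNMCAux

open Function List

variable {V : Type*} {W : Type*}

/-! ### Walks from chains -/

lemma exists_walk_of_chain {G : SimpleGraph V} :
    ∀ (x : V) (l : List V), List.Chain G.Adj x l →
    ∃ (y : V) (w : G.Walk x y), w.support = x :: l := by
  intro x l
  induction l generalizing x with
  | nil => intro _; exact ⟨x, Walk.nil, by simp⟩
  | cons z l' ih =>
    intro h
    rw [List.Chain, List.isChain_cons_cons] at h
    obtain ⟨y, w, hw⟩ := ih z h.2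
    exact ⟨y, Walk.cons h.1 w, by simp [hw]⟩

lemma exists_path_of_chain {G : SimpleGraph V} (x : V) (l : List V)
    (hc : List.Chain G.Adj x l) (hnd : (x :: l).Nodup) :
    ∃ (y : V) (w : G.Walk x y), w.IsPath ∧ w.length + 1 = l.length + 1 := by
  obtain ⟨y, w, hw⟩ := exists_walk_of_chain x l hc
  refine ⟨y, w, Walk.IsPath.mk' (by rw [hw]; exact hnd), ?_⟩
  have := w.length_support
  rw [hw] at this
  simpa using this.symm

/-! ### Prefix and suffix walks -/

lemma exists_take_walk {G : SimpleGraph V} {u v : V} (q : G.Walk u v) (d : V) :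
    ∀ j, j < q.length + 1 → ∃ w : G.Walk u (q.support.getD j d), w.length = j := by
  induction q with
  | nil =>
    intro j hj
    have hj0 : j = 0 := by simpa using hj
    subst hj0
    exact ⟨Walk.nil, rfl⟩
  | cons h p ih =>
    intro j hj
    match j with
    | 0 => exact ⟨Walk.nil, rfl⟩
    | j+1 =>
      obtain ⟨w, hw⟩ := ih j (by simp [Walk.length_cons] at hj; omega)
      exact ⟨Walk.cons h w, by show w.length + 1 = j + 1; omega⟩

lemma exists_drop_walk {G : SimpleGraph V} {u v : V} (q : G.Walk u v) (d : V) :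
    ∀ j, j < q.length + 1 → ∃ w : G.Walk (q.support.getD j d) v, w.length + j = q.length := by
  induction q with
  | nil =>
    intro j hj
    have hj0 : j = 0 := by simpa using hj
    subst hj0
    exact ⟨Walk.nil, rfl⟩
  | cons h p ih =>
    intro j hj
    match j with
    | 0 => exact ⟨Walk.cons h p, rfl⟩
    | j+1 =>
      obtain ⟨w, hw⟩ := ih j (by simp [Walk.length_cons] at hj; omega)
      refine ⟨w, ?_⟩
      simp only [Walk.length_cons]
      show w.length + (j + 1) = p.length + 1
      omega

/-! ### Embedding of a path graph from a shortest path -/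

noncomputable def pathGraph_emb_mono {k m : ℕ} (h : k ≤ m) :
    pathGraph k ↪g pathGraph m := by
  refine ⟨Fin.castLEEmb h, ?_⟩
  intro a b
  simp [pathGraph_adj, Fin.castLEEmb, Fin.castLE]

lemma emb_pathGraph_of_shortest {G : SimpleGraph V} {u v : V} (q : G.Walk u v)
    (hq : q.IsPath) (hd : q.length = G.dist u v) :
    Nonempty (pathGraph (q.length + 1) ↪g G) := by
  classical
  have hlen : q.support.length = q.length + 1 := q.length_support
  set L := q.length with hL
  let f : Fin (L + 1) → V := fun i => q.support.getD i u
  have hget : ∀ i : Fin (L + 1), f i = q.support.get ⟨i, by omega⟩ := by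
    intro i
    simp only [f]
    rw [List.getD_eq_getElem q.support u (by omega)]
    simp
  have finj : Function.Injective f := by
    intro i j hij
    rw [hget, hget] at hij
    have := (List.nodup_iff_injective_get.mp hq.support_nodup) hij
    ext
    simpa using congrArg Fin.val this
  -- consecutive entries are adjacent
  have hadjN : ∀ i : ℕ, i + 1 ≤ L → G.Adj (q.support.getD i u) (q.support.getD (i+1) u) := by
    intro i hi
    have hc := q.isChain_adj_support
    rw [List.isChain_iff_getElem] at hc
    have h2 := hc i (by omega)
    rw [List.getD_eq_getElem q.support u (by omega), List.getD_eq_getElem q.support u (by omega)]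
    simpa using h2
  have hadj : ∀ i j : Fin (L + 1), (i : ℕ) + 1 = (j : ℕ) → G.Adj (f i) (f j) := by
    intro i j hij
    have := hadjN i (by omega)
    simp only [f]
    rw [← hij]
    exact this
  -- no shortcuts
  have hshort : ∀ i j : Fin (L + 1), (i : ℕ) + 1 < (j : ℕ) → ¬ G.Adj (f i) (f j) := by
    intro i j hij hAdj
    obtain ⟨w1, hw1⟩ := exists_take_walk q u i (by omega)
    obtain ⟨w2, hw2⟩ := exists_drop_walk q u j (by omega)
    have hwalk : G.Walk u v := w1.append (Walk.cons hAdj w2)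
    have hle := G.dist_le (w1.append (Walk.cons hAdj w2))
    rw [Walk.length_append, Walk.length_cons] at hle
    rw [← hd] at hle
    omega
  refine ⟨⟨⟨f, finj⟩, ?_⟩⟩
  intro i j
  constructor
  · intro hA
    rw [pathGraph_adj]
    by_contra hno
    push_neg at hno
    have hne : (i : ℕ) ≠ (j : ℕ) := by
      intro h
      have : i = j := by ext; exact h
      subst this
      exact G.loopless.irrefl _ hA
    rcases Nat.lt_or_ge (i : ℕ) (j : ℕ) with h | h
    · exact hshort i j (by omega) hA
    · exact hshort j i (by omega) hA.symm
  · intro hA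
    rw [pathGraph_adj] at hA
    rcases hA with h | h
    · exact hadj i j h
    · exact (hadj j i h).symm

/-! ### A minimal-length walk that is an induced path -/

lemma exists_shortest_path {G : SimpleGraph V} {u v : V} (h : G.Reachable u v) :
    ∃ q : G.Walk u v, q.IsPath ∧ q.length = G.dist u v := by
  classical
  obtain ⟨p, hp⟩ := h.exists_walk_length_eq_dist
  refine ⟨p.bypass, p.bypass_isPath, le_antisymm ?_ (G.dist_le _)⟩
  calc p.bypass.length ≤ p.length := p.length_bypass_le
  _ = G.dist u v := hp


/-! ### Word data for bipartite permutation (letter) graphs -/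

structure WordData {V : Type*} (G : SimpleGraph V) where
  pos : V → ℕ
  lvl : V → ℕ
  posInj : Function.Injective pos
  adj_iff : ∀ x y, G.Adj x y ↔
    (pos x < pos y ∧ lvl y = lvl x + 1) ∨ (pos y < pos x ∧ lvl x = lvl y + 1)

namespace WordData

variable {G : SimpleGraph V} (wd : WordData G)

lemma lvl_adj {x y : V} (h : G.Adj x y) :
    wd.lvl y = wd.lvl x + 1 ∨ wd.lvl x = wd.lvl y + 1 := by
  rcases (wd.adj_iff x y).mp h with ⟨_, h⟩ | ⟨_, h⟩
  · exact Or.inl h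
  · exact Or.inr h

lemma not_adj_of_lvl_eq {x y : V} (h : wd.lvl x = wd.lvl y) : ¬ G.Adj x y := by
  intro hA
  rcases wd.lvl_adj hA with h' | h' <;> omega

lemma adj_of_lt {x y : V} (h1 : wd.pos x < wd.pos y) (h2 : wd.lvl y = wd.lvl x + 1) :
    G.Adj x y := (wd.adj_iff x y).mpr (Or.inl ⟨h1, h2⟩)

lemma pos_lt_of_adj {x y : V} (hA : G.Adj x y) (h2 : wd.lvl y = wd.lvl x + 1) :
    wd.pos x < wd.pos y := by
  rcases (wd.adj_iff x y).mp hA with ⟨h, _⟩ | ⟨_, h⟩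
  · exact h
  · omega

/-- Word data restricts to induced subgraphs. -/
def induce (s : Set V) : WordData (G.induce s) where
  pos := fun x => wd.pos x.val
  lvl := fun x => wd.lvl x.val
  posInj := fun x y h => Subtype.ext (wd.posInj h)
  adj_iff := fun x y => by
    have : (G.induce s).Adj x y ↔ G.Adj x.val y.val := by simp
    rw [this, wd.adj_iff]

end WordData

/-- The level function is 1-Lipschitz along walks. -/
lemma lvl_walk_bound {G : SimpleGraph V} (wd : WordData G) {u v : V} (q : G.Walk u v) :
    wd.lvl v ≤ wd.lvl u + q.length ∧ wd.lvl u ≤ wd.lvl v + q.length := by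
  induction q with
  | nil => simp
  | cons h p ih =>
    rename_i a b c
    have := wd.lvl_adj h
    rw [Walk.length_cons]
    omega

/-! ### Bicliques from matchings -/

lemma biclique_of_pairs {G : SimpleGraph V} (wd : WordData G) {a ℓ : ℕ} (U Z : Fin a → V)
    (hU : ∀ i, wd.lvl (U i) = ℓ) (hZ : ∀ j, wd.lvl (Z j) = ℓ + 1)
    (hUZ : ∀ i j, wd.pos (U i) < wd.pos (Z j))
    (hUi : Function.Injective U) (hZi : Function.Injective Z) :
    Nonempty (completeBipartiteGraph (Fin a) (Fin a) ↪g G) := by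
  have hUZne : ∀ i j, U i ≠ Z j := by
    intro i j h
    have := hU i
    rw [h, hZ j] at this
    omega
  have finj : Function.Injective (Sum.elim U Z) := by
    intro s t hst
    cases s with
    | inl i => cases t with
      | inl j => exact congrArg Sum.inl (hUi hst)
      | inr j => exact absurd hst (hUZne i j)
    | inr i => cases t with
      | inl j => exact absurd hst.symm (hUZne j i)
      | inr j => exact congrArg Sum.inr (hZi hst)
  refine ⟨⟨⟨Sum.elim U Z, finj⟩, ?_⟩⟩
  intro s t
  cases s with
  | inl i => cases t with
    | inl j =>
      simp only [Function.Embedding.coeFn_mk, Sum.elim_inl, completeBipartiteGraph_adj]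
      constructor
      · intro hA; exact absurd hA (wd.not_adj_of_lvl_eq (by rw [hU i, hU j]))
      · simp
    | inr j =>
      simp only [Function.Embedding.coeFn_mk, Sum.elim_inl, Sum.elim_inr,
        completeBipartiteGraph_adj]
      constructor
      · intro _; simp
      · intro _; exact wd.adj_of_lt (hUZ i j) (by rw [hU i, hZ j])
  | inr i => cases t with
    | inl j =>
      simp only [Function.Embedding.coeFn_mk, Sum.elim_inl, Sum.elim_inr,
        completeBipartiteGraph_adj]
      constructor
      · intro _; simp
      · intro _; exact (wd.adj_of_lt (hUZ j i) (by rw [hU j, hZ i])).symm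
    | inr j =>
      simp only [Function.Embedding.coeFn_mk, Sum.elim_inr, completeBipartiteGraph_adj]
      constructor
      · intro hA; exact absurd hA (wd.not_adj_of_lvl_eq (by rw [hZ i, hZ j]))
      · simp

lemma biclique_of_matching {G : SimpleGraph V} (wd : WordData G) {a ℓ : ℕ}
    {ι : Type*} [DecidableEq ι] (P : Finset ι) (f z : ι → V)
    (hcard : 2 * a ≤ P.card)
    (hfl : ∀ i ∈ P, wd.lvl (f i) = ℓ)
    (hzl : ∀ i ∈ P, wd.lvl (z i) = ℓ + 1)
    (hfz : ∀ i ∈ P, wd.pos (f i) < wd.pos (z i))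
    (hfi : Set.InjOn (wd.pos ∘ f) P)
    (hzi : Set.InjOn z P) :
    Nonempty (completeBipartiteGraph (Fin a) (Fin a) ↪g G) := by
  classical
  have hQcard : (P.image (wd.pos ∘ f)).card = P.card := Finset.card_image_of_injOn hfi
  set N := (P.image (wd.pos ∘ f)).card with hN
  have hcard' : 2 * a ≤ N := by omega
  let g : Fin N ↪o ℕ := (P.image (wd.pos ∘ f)).orderEmbOfFin rfl
  have hmem : ∀ k : Fin N, ∃ i, i ∈ P ∧ wd.pos (f i) = g k := by
    intro k
    have h1 : g k ∈ P.image (wd.pos ∘ f) := Finset.orderEmbOfFin_mem _ rfl k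
    obtain ⟨i, hi, hval⟩ := Finset.mem_image.mp h1
    exact ⟨i, hi, hval⟩
  choose x hxP hxval using hmem
  have hxinj : ∀ k k', x k = x k' → k = k' := by
    intro k k' h
    have : g k = g k' := by rw [← hxval k, ← hxval k', h]
    exact g.injective this
  let K1 : Fin a → Fin N := fun i => ⟨i, by omega⟩
  let K2 : Fin a → Fin N := fun j => ⟨a + j, by omega⟩
  have hUZ : ∀ i j : Fin a, wd.pos (f (x (K1 i))) < wd.pos (z (x (K2 j))) := by
    intro i j
    have h1 : wd.pos (f (x (K1 i))) = g (K1 i) := hxval _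
    have h2 : wd.pos (f (x (K2 j))) = g (K2 j) := hxval _
    have hlt : g (K1 i) < g (K2 j) := by
      apply g.strictMono
      simp only [K1, K2, Fin.mk_lt_mk]
      omega
    have h3 := hfz _ (hxP (K2 j))
    omega
  have hUi : Function.Injective (fun i : Fin a => f (x (K1 i))) := by
    intro i j h
    simp only at h
    have h1 : wd.pos (f (x (K1 i))) = wd.pos (f (x (K1 j))) := by rw [h]
    rw [hxval, hxval] at h1
    have h2 : K1 i = K1 j := g.injective h1
    have := congrArg Fin.val h2
    simp only [K1] at this
    exact Fin.ext this
  have hZi : Function.Injective (fun j : Fin a => z (x (K2 j))) := by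
    intro i j h
    simp only at h
    have hx' : x (K2 i) = x (K2 j) := hzi (hxP _) (hxP _) h
    have h2 : K2 i = K2 j := hxinj _ _ hx'
    have := congrArg Fin.val h2
    simp only [K2] at this
    exact Fin.ext (by omega)
  exact biclique_of_pairs wd _ _ (fun i => hfl _ (hxP _)) (fun j => hzl _ (hxP _)) hUZ hUi hZi


/-! ### Counting vertices of a path on one level -/

lemma level_count_list {V : Type*} [DecidableEq V] {G : SimpleGraph V} (wd : WordData G) {a : ℕ}
    (hK : IsEmpty (completeBipartiteGraph (Fin a) (Fin a) ↪g G))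
    (u : V) (l : List V) (hnd : l.Nodup) (hch : l.Chain' G.Adj) (ℓ : ℕ) :
    (l.toFinset.filter (fun x => wd.lvl x = ℓ)).card ≤ 4 * a + 1 := by
  classical
  have hgetInj : ∀ i j, i < l.length → j < l.length → l.getD i u = l.getD j u → i = j := by
    intro i j hi hj h
    rw [List.getD_eq_getElem l u hi, List.getD_eq_getElem l u hj] at h
    have h2 : l.get ⟨i, hi⟩ = l.get ⟨j, hj⟩ := by simpa using h
    have h3 := List.nodup_iff_injective_get.mp hnd h2
    exact congrArg Fin.val h3
  have hadjN : ∀ i, i + 1 < l.length → G.Adj (l.getD i u) (l.getD (i+1) u) := by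
    intro i hi
    rw [List.Chain', List.isChain_iff_getElem] at hch
    have h2 := hch i (by omega)
    rw [List.getD_eq_getElem l u (by omega), List.getD_eq_getElem l u (by omega)]
    simpa using h2
  have hstep1 : (l.toFinset.filter (fun x => wd.lvl x = ℓ)).card ≤
      ((Finset.range l.length).filter (fun i => wd.lvl (l.getD i u) = ℓ)).card := by
    apply Finset.card_le_card_of_surjOn (fun i => l.getD i u)
    intro x hx
    simp only [Finset.coe_filter, List.mem_toFinset, Set.mem_setOf_eq] at hx
    obtain ⟨hmem, hlvl⟩ := hx
    obtain ⟨i, hi, hival⟩ := List.mem_iff_getElem.mp hmem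
    have hgd : l.getD i u = x := by rw [List.getD_eq_getElem l u hi, hival]
    refine ⟨i, ?_, hgd⟩
    simp only [Finset.coe_filter, Finset.mem_range, Set.mem_setOf_eq]
    exact ⟨hi, by rw [hgd]; exact hlvl⟩
  have hAupcard : ((Finset.range l.length).filter
      (fun i => i + 1 < l.length ∧ wd.lvl (l.getD i u) = ℓ ∧
        wd.lvl (l.getD (i+1) u) = ℓ + 1)).card ≤ 2 * a := by
    by_contra hbig
    push_neg at hbig
    refine hK.false (Classical.choice (biclique_of_matching wd (ℓ := ℓ) _
      (fun i => l.getD i u) (fun i => l.getD (i+1) u) (le_of_lt hbig) ?_ ?_ ?_ ?_ ?_))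
    · intro i hi
      simp only [Finset.mem_filter, Finset.mem_range] at hi
      exact hi.2.2.1
    · intro i hi
      simp only [Finset.mem_filter, Finset.mem_range] at hi
      exact hi.2.2.2
    · intro i hi
      simp only [Finset.mem_filter, Finset.mem_range] at hi
      exact wd.pos_lt_of_adj (hadjN i hi.2.1) (by omega)
    · intro i hi j hj h
      simp only [Finset.coe_filter, Set.mem_setOf_eq, Finset.mem_range] at hi hj
      exact hgetInj i j (by omega) (by omega) (wd.posInj h)
    · intro i hi j hj h
      simp only [Finset.coe_filter, Set.mem_setOf_eq, Finset.mem_range] at hi hj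
      have := hgetInj (i+1) (j+1) (by omega) (by omega) h
      omega
  have hAdowncard : ((Finset.range l.length).filter
      (fun i => i + 1 < l.length ∧ wd.lvl (l.getD i u) = ℓ ∧
        wd.lvl (l.getD i u) = wd.lvl (l.getD (i+1) u) + 1)).card ≤ 2 * a := by
    rcases Nat.eq_zero_or_pos ℓ with h0 | hpos
    · have hempty : ((Finset.range l.length).filter
          (fun i => i + 1 < l.length ∧ wd.lvl (l.getD i u) = ℓ ∧
            wd.lvl (l.getD i u) = wd.lvl (l.getD (i+1) u) + 1)) = ∅ := by
        apply Finset.eq_empty_of_forall_notMem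
        intro i hi
        simp only [Finset.mem_filter, Finset.mem_range] at hi
        omega
      rw [hempty]
      simp
    · obtain ⟨ℓ', rfl⟩ : ∃ ℓ', ℓ = ℓ' + 1 := ⟨ℓ - 1, by omega⟩
      by_contra hbig
      push_neg at hbig
      refine hK.false (Classical.choice (biclique_of_matching wd (ℓ := ℓ') _
        (fun i => l.getD (i+1) u) (fun i => l.getD i u) (le_of_lt hbig) ?_ ?_ ?_ ?_ ?_))
      · intro i hi
        simp only [Finset.mem_filter, Finset.mem_range] at hi
        omega
      · intro i hi
        simp only [Finset.mem_filter, Finset.mem_range] at hi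
        omega
      · intro i hi
        simp only [Finset.mem_filter, Finset.mem_range] at hi
        have h2 : wd.lvl (l.getD i u) = wd.lvl (l.getD (i+1) u) + 1 := hi.2.2.2
        exact wd.pos_lt_of_adj (hadjN i hi.2.1).symm h2
      · intro i hi j hj h
        simp only [Finset.coe_filter, Set.mem_setOf_eq, Finset.mem_range] at hi hj
        have := hgetInj (i+1) (j+1) (by omega) (by omega) (wd.posInj h)
        omega
      · intro i hi j hj h
        simp only [Finset.coe_filter, Set.mem_setOf_eq, Finset.mem_range] at hi hj
        exact hgetInj i j (by omega) (by omega) h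
  have hsub : ((Finset.range l.length).filter (fun i => wd.lvl (l.getD i u) = ℓ)) ⊆
      (((Finset.range l.length).filter
        (fun i => i + 1 < l.length ∧ wd.lvl (l.getD i u) = ℓ ∧
          wd.lvl (l.getD (i+1) u) = ℓ + 1)) ∪
       ((Finset.range l.length).filter
        (fun i => i + 1 < l.length ∧ wd.lvl (l.getD i u) = ℓ ∧
          wd.lvl (l.getD i u) = wd.lvl (l.getD (i+1) u) + 1))) ∪ {l.length - 1} := by
    intro i hi
    simp only [Finset.mem_filter, Finset.mem_range] at hi
    obtain ⟨hin, hlvl⟩ := hi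
    by_cases hi1 : i + 1 < l.length
    · rcases wd.lvl_adj (hadjN i hi1) with hc | hc
      · apply Finset.mem_union_left
        apply Finset.mem_union_left
        simp only [Finset.mem_filter, Finset.mem_range]
        exact ⟨hin, hi1, hlvl, by omega⟩
      · apply Finset.mem_union_left
        apply Finset.mem_union_right
        simp only [Finset.mem_filter, Finset.mem_range]
        exact ⟨hin, hi1, hlvl, hc⟩
    · apply Finset.mem_union_right
      simp only [Finset.mem_singleton]
      omega
  have h1 := Finset.card_le_card hsub
  have h2 := Finset.card_union_le
    ((((Finset.range l.length).filter
        (fun i => i + 1 < l.length ∧ wd.lvl (l.getD i u) = ℓ ∧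
          wd.lvl (l.getD (i+1) u) = ℓ + 1)) ∪
       ((Finset.range l.length).filter
        (fun i => i + 1 < l.length ∧ wd.lvl (l.getD i u) = ℓ ∧
          wd.lvl (l.getD i u) = wd.lvl (l.getD (i+1) u) + 1))))
    ({l.length - 1} : Finset ℕ)
  have h3 := Finset.card_union_le
    ((Finset.range l.length).filter
        (fun i => i + 1 < l.length ∧ wd.lvl (l.getD i u) = ℓ ∧
          wd.lvl (l.getD (i+1) u) = ℓ + 1))
    ((Finset.range l.length).filter
        (fun i => i + 1 < l.length ∧ wd.lvl (l.getD i u) = ℓ ∧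
          wd.lvl (l.getD i u) = wd.lvl (l.getD (i+1) u) + 1))
  have h4 : ({l.length - 1} : Finset ℕ).card = 1 := Finset.card_singleton _
  omega

lemma level_count {V : Type*} [DecidableEq V] {G : SimpleGraph V} (wd : WordData G) {a : ℕ}
    (hK : IsEmpty (completeBipartiteGraph (Fin a) (Fin a) ↪g G))
    {u v : V} (q : G.Walk u v) (hq : q.IsPath) (ℓ : ℕ) :
    (q.support.toFinset.filter (fun x => wd.lvl x = ℓ)).card ≤ 4 * a + 1 :=
  level_count_list wd hK u q.support hq.support_nodup q.isChain_adj_support ℓ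

/-! ### The key bound: a letter graph with no large biclique and no long
induced path has no long path. -/

lemma reachable_induce {G : SimpleGraph V} {s : Set V} :
    ∀ {x y : V} (q : G.Walk x y) (_ : ∀ z ∈ q.support, z ∈ s)
      (x' y' : s), (x' : V) = x → (y' : V) = y → (G.induce s).Reachable x' y' := by
  intro x y q
  induction q with
  | nil =>
    intro hsub x' y' hx hy
    have : x' = y' := Subtype.ext (by rw [hx, hy])
    rw [this]
  | cons h p ih =>
    rename_i a b c
    intro hsub x' y' hx hy
    have hb : b ∈ s := hsub b (by simp)
    have hadj : (G.induce s).Adj x' ⟨b, hb⟩ := by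
      show G.Adj (x' : V) b
      rw [hx]
      exact h
    exact hadj.reachable.trans (ih (fun z hz => hsub z (by simp [hz])) ⟨b, hb⟩ y' rfl hy)

theorem star_bound {V : Type*} [DecidableEq V] {G : SimpleGraph V} (wd : WordData G)
    {a p : ℕ}
    (hK : IsEmpty (completeBipartiteGraph (Fin a) (Fin a) ↪g G))
    (hP : IsEmpty (pathGraph p ↪g G))
    {u v : V} (q : G.Walk u v) (hq : q.IsPath) :
    q.length + 1 ≤ (2 * p + 1) * (4 * a + 1) := by
  classical
  set s : Set V := {x | x ∈ q.support} with hs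
  set H := G.induce s with hH
  have hu : u ∈ s := q.start_mem_support
  set u' : s := ⟨u, hu⟩ with hu'
  set wdH := wd.induce s with hwdH
  -- distance/level bound
  have hspread : ∀ x ∈ q.support, wd.lvl x ≤ wd.lvl u + (p-1) ∧ wd.lvl u ≤ wd.lvl x + (p-1) := by
    intro x hx
    set x' : s := ⟨x, hx⟩ with hx'
    have hreach : H.Reachable u' x' := by
      apply reachable_induce (q.takeUntil x hx)
        (fun z hz => q.support_takeUntil_subset hx hz) u' x' rfl rfl
    obtain ⟨w, hwpath, hwlen⟩ := exists_shortest_path hreach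
    -- no long induced path: distance is small
    have hdlt : w.length + 1 < p + 1 := by
      by_contra hge
      push_neg at hge
      have hemb : Nonempty (pathGraph (w.length + 1) ↪g H) :=
        emb_pathGraph_of_shortest w hwpath hwlen
      obtain ⟨e⟩ := hemb
      have : pathGraph p ↪g G :=
        ((SimpleGraph.Embedding.induce s).comp e).comp (pathGraph_emb_mono (by omega))
      exact hP.false this
    have hlb := lvl_walk_bound wdH w
    have e1 : wdH.lvl u' = wd.lvl u := rfl
    have e2 : wdH.lvl x' = wd.lvl x := rfl
    rw [e1, e2] at hlb
    omega
  -- counting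
  set T := q.support.toFinset with hT
  have hTcard : T.card = q.length + 1 := by
    rw [hT, List.toFinset_card_of_nodup hq.support_nodup, q.length_support]
  set Wn := Finset.Icc (wd.lvl u - (p-1)) (wd.lvl u + (p-1)) with hWn
  have hmemW : ∀ x ∈ T, wd.lvl x ∈ Wn := by
    intro x hx
    rw [hT, List.mem_toFinset] at hx
    have := hspread x hx
    rw [hWn, Finset.mem_Icc]
    omega
  have hfiber := Finset.card_eq_sum_card_fiberwise hmemW
  have hbound : ∀ ℓ ∈ Wn, (T.filter (fun x => wd.lvl x = ℓ)).card ≤ 4 * a + 1 := by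
    intro ℓ _
    exact level_count wd hK q hq ℓ
  have hsum : ∑ ℓ ∈ Wn, (T.filter (fun x => wd.lvl x = ℓ)).card ≤ Wn.card * (4 * a + 1) := by
    calc ∑ ℓ ∈ Wn, (T.filter (fun x => wd.lvl x = ℓ)).card
        ≤ Wn.card • (4 * a + 1) := Finset.sum_le_card_nsmul _ _ _ hbound
      _ = Wn.card * (4 * a + 1) := by simp [smul_eq_mul]
  have hWcard : Wn.card ≤ 2 * p + 1 := by
    rw [hWn, Nat.card_Icc]
    omega
  have : T.card ≤ Wn.card * (4 * a + 1) := by omega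
  calc q.length + 1 = T.card := hTcard.symm
    _ ≤ Wn.card * (4 * a + 1) := this
    _ ≤ (2 * p + 1) * (4 * a + 1) := Nat.mul_le_mul_right _ hWcard


lemma exists_walk_of_chain' {G : SimpleGraph V} :
    ∀ (x : V) (l : List V), List.Chain G.Adj x l →
    ∃ (y : V) (w : G.Walk x y), w.support = x :: l := by
  intro x l
  induction l generalizing x with
  | nil => intro _; exact ⟨x, Walk.nil, by simp⟩
  | cons z l' ih =>
    intro h
    rw [List.Chain, List.isChain_cons_cons] at h
    obtain ⟨y, w, hw⟩ := ih z h.2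
    exact ⟨y, Walk.cons h.1 w, by simp [hw]⟩

lemma exists_path_of_list {G : SimpleGraph V} (l : List V) (hne : l ≠ [])
    (hc : List.Chain' G.Adj l) (hnd : l.Nodup) :
    ∃ (x y : V) (w : G.Walk x y), w.IsPath ∧ w.length + 1 = l.length := by
  match l, hne with
  | x :: t, _ =>
    have hch : List.Chain G.Adj x t := hc
    obtain ⟨y, w, hw⟩ := exists_walk_of_chain' x t hch
    refine ⟨x, y, w, Walk.IsPath.mk' (hw ▸ hnd), ?_⟩
    have hls := w.length_support
    rw [hw] at hls
    simp only [List.length_cons] at hls ⊢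
    omega

/-! ### complete bipartite graphs -/

lemma cbg_adj_isLeft {α β : Type*} (x y : α ⊕ β) :
    (completeBipartiteGraph α β).Adj x y ↔ x.isLeft ≠ y.isLeft := by
  cases x <;> cases y <;> simp

noncomputable def cbgMonoEmb {α β a b : ℕ} (h1 : α ≤ a) (h2 : β ≤ b) :
    completeBipartiteGraph (Fin α) (Fin β) ↪g completeBipartiteGraph (Fin a) (Fin b) := by
  refine ⟨(Fin.castLEEmb h1).sumMap (Fin.castLEEmb h2), ?_⟩
  intro x y
  cases x <;> cases y <;> simp [Function.Embedding.sumMap]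

/-- The complete bipartite graph as a graph on `Fin (a+b)`. -/
noncomputable def cbgF (a b : ℕ) : SimpleGraph (Fin (a + b)) :=
  (completeBipartiteGraph (Fin a) (Fin b)).comap finSumFinEquiv.symm

noncomputable def cbgF_iso (a b : ℕ) :
    cbgF a b ≃g completeBipartiteGraph (Fin a) (Fin b) :=
  ⟨finSumFinEquiv.symm, Iff.rfl⟩

lemma isCompleteBipartite_cbgF (a b : ℕ) : IsCompleteBipartite (cbgF a b) :=
  ⟨a, b, ⟨cbgF_iso a b⟩⟩

/-- Complete bipartiteness is inherited by induced subgraphs. -/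
lemma isCompleteBipartite_of_emb {m a b : ℕ} {H : SimpleGraph (Fin m)}
    (f : H ↪g completeBipartiteGraph (Fin a) (Fin b)) : IsCompleteBipartite H := by
  classical
  let pL : Fin m → Prop := fun x => (f x).isLeft = true
  haveI : DecidablePred pL := fun x => inferInstanceAs (Decidable (_ = true))
  let e1 : {x // pL x} ⊕ {x // ¬ pL x} ≃ Fin m := Equiv.sumCompl pL
  let eL := Fintype.equivFin {x // pL x}
  let eR := Fintype.equivFin {x // ¬ pL x}
  let e : Fin m ≃ Fin (Fintype.card {x // pL x}) ⊕ Fin (Fintype.card {x // ¬ pL x}) :=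
    e1.symm.trans (eL.sumCongr eR)
  have key : ∀ x, (e x).isLeft = (f x).isLeft := by
    intro x
    by_cases h : pL x
    · have h1 : e1.symm x = Sum.inl ⟨x, h⟩ := Equiv.sumCompl_symm_apply_of_pos h
      have : e x = Sum.inl (eL ⟨x, h⟩) := by
        simp only [e, Equiv.trans_apply, h1, Equiv.sumCongr_apply, Sum.map_inl]
      rw [this]
      simp only [Sum.isLeft_inl]
      exact (h.symm)
    · have h1 : e1.symm x = Sum.inr ⟨x, h⟩ := Equiv.sumCompl_symm_apply_of_neg h
      have : e x = Sum.inr (eR ⟨x, h⟩) := by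
        simp only [e, Equiv.trans_apply, h1, Equiv.sumCongr_apply, Sum.map_inr]
      rw [this]
      simp only [Sum.isLeft_inr]
      simp only [pL, Bool.not_eq_true] at h
      exact h.symm
  refine ⟨_, _, ⟨⟨e, ?_⟩⟩⟩
  intro x y
  rw [cbg_adj_isLeft, key, key, ← f.map_rel_iff, cbg_adj_isLeft]

/-! ### Paths in complete bipartite graphs alternate sides -/

lemma count_bool (bl : List Bool) : bl.count true + bl.count false = bl.length := by
  induction bl with
  | nil => simp
  | cons b tl ih => cases b <;> simp [List.count_cons] <;> omega

lemma alt_count : ∀ (bl : List Bool), List.Chain' (· ≠ ·) bl →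
    bl.count true ≤ bl.count false + 1 ∧ bl.count false ≤ bl.count true + 1
  | [], _ => by simp
  | [b], _ => by cases b <;> simp
  | b :: b2 :: tl, h => by
    rw [List.Chain', List.isChain_cons_cons] at h
    obtain ⟨hne, htl⟩ := h
    have hb2 : b2 = !b := by cases b <;> cases b2 <;> simp_all
    have ih := alt_count tl htl.tail
    subst hb2
    cases b <;> simp [List.count_cons] <;> omega

lemma count_sides {α β : Type*} (l : List (α ⊕ β)) :
    (l.map Sum.isLeft).count true = (l.filterMap Sum.getLeft?).length ∧
    (l.map Sum.isLeft).count false = (l.filterMap Sum.getRight?).length := by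
  induction l with
  | nil => simp
  | cons x tl ih =>
    cases x <;> simp [List.count_cons, List.filterMap_cons, ih.1, ih.2]

lemma cb_walk_side_bound {a b : ℕ} {u v : Fin a ⊕ Fin b}
    (q : (completeBipartiteGraph (Fin a) (Fin b)).Walk u v) (hq : q.IsPath) {m : ℕ}
    (hlen : 2 * m + 2 ≤ q.length + 1) : m + 1 ≤ a ∧ m + 1 ≤ b := by
  classical
  have hlen2 : q.support.length = q.length + 1 := q.length_support
  have hch : q.support.Chain' (fun x y => x.isLeft ≠ y.isLeft) := by
    refine List.IsChain.imp ?_ q.isChain_adj_support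
    intro x y hxy
    exact (cbg_adj_isLeft x y).mp hxy
  have hbl : (q.support.map Sum.isLeft).Chain' (· ≠ ·) := (List.isChain_map _).mpr hch
  obtain ⟨h1, h2⟩ := alt_count _ hbl
  obtain ⟨hcl, hcr⟩ := count_sides q.support
  have hctA : (q.support.filterMap Sum.getLeft?).length ≤ a := by
    have hnd : (q.support.filterMap Sum.getLeft?).Nodup := by
      refine List.Nodup.filterMap ?_ hq.support_nodup
      intro x x' y h1' h2'
      cases x <;> cases x' <;> simp_all
    simpa using hnd.length_le_card
  have hctB : (q.support.filterMap Sum.getRight?).length ≤ b := by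
    have hnd : (q.support.filterMap Sum.getRight?).Nodup := by
      refine List.Nodup.filterMap ?_ hq.support_nodup
      intro x x' y h1' h2'
      cases x <;> cases x' <;> simp_all
    simpa using hnd.length_le_card
  have hsum := count_bool (q.support.map Sum.isLeft)
  rw [List.length_map] at hsum
  omega

/-! ### A long path in the complete bipartite graph -/

lemma cbg_long_path {c : ℕ} (hc : 1 ≤ c) :
    ∃ (x y : Fin c ⊕ Fin c) (w : (completeBipartiteGraph (Fin c) (Fin c)).Walk x y),
      w.IsPath ∧ w.length + 1 = 2 * c := by
  have hcpos : 0 < c := hc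
  set f : ℕ → Fin c ⊕ Fin c := fun i =>
    if i % 2 = 0 then Sum.inl ⟨min (i / 2) (c - 1), by omega⟩
    else Sum.inr ⟨min (i / 2) (c - 1), by omega⟩ with hf
  have hfinj : ∀ i j, i < 2 * c → j < 2 * c → f i = f j → i = j := by
    intro i j hi hj h
    rw [hf] at h
    dsimp only at h
    by_cases h1 : i % 2 = 0 <;> by_cases h2 : j % 2 = 0
    · rw [if_pos h1, if_pos h2] at h
      simp only [Sum.inl.injEq, Fin.mk.injEq] at h
      omega
    · rw [if_pos h1, if_neg h2] at h
      simp at h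
    · rw [if_neg h1, if_pos h2] at h
      simp at h
    · rw [if_neg h1, if_neg h2] at h
      simp only [Sum.inr.injEq, Fin.mk.injEq] at h
      omega
  have hchain : ((List.range (2 * c)).map f).Chain' (completeBipartiteGraph (Fin c) (Fin c)).Adj := by
    rw [List.Chain', List.isChain_iff_getElem]
    intro i hi
    simp only [List.length_map, List.length_range] at hi
    have hg1 : ((List.range (2 * c)).map f).get ⟨i, by simpa using (by omega : i < 2 * c)⟩ = f i := by
      simp
    have hg2 : ((List.range (2 * c)).map f).get ⟨i + 1, by simpa using (by omega : i + 1 < 2 * c)⟩ = f (i + 1) := by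
      simp
    simp only [List.getElem_map, List.getElem_range]
    rw [hf]
    by_cases h : i % 2 = 0
    · have h1 : ¬ ((i+1) % 2 = 0) := by omega
      simp [h, h1]
    · have h1 : (i+1) % 2 = 0 := by omega
      simp [h, h1]
  have hnd : ((List.range (2 * c)).map f).Nodup := by
    refine List.Nodup.map_on ?_ List.nodup_range
    intro i hi j hj h
    rw [List.mem_range] at hi hj
    exact hfinj i j hi hj h
  obtain ⟨x, y, w, hw, hwl⟩ := exists_path_of_list (G := completeBipartiteGraph (Fin c) (Fin c))
    ((List.range (2 * c)).map f) (by
      intro hnil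
      have := congrArg List.length hnil
      simp at this
      omega) hchain hnd
  refine ⟨x, y, w, hw, ?_⟩
  rw [hwl]
  simp

lemma cbgF_long_path {c : ℕ} (hc : 1 ≤ c) :
    ∃ (x y : Fin (c + c)) (w : (cbgF c c).Walk x y), w.IsPath ∧ w.length + 1 = 2 * c := by
  obtain ⟨x, y, w, hw, hwl⟩ := cbg_long_path hc
  let φ := (cbgF_iso c c).symm
  refine ⟨φ x, φ y, w.map φ.toHom, ?_, ?_⟩
  · exact Walk.map_isPath_of_injective φ.injective hw
  · rw [Walk.length_map]; exact hwl

/-! ### A long path in the path graph -/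

lemma pathGraph_long_path (n : ℕ) (hn : 1 ≤ n) :
    ∃ (x y : Fin n) (w : (pathGraph n).Walk x y), w.IsPath ∧ w.length + 1 = n := by
  have hchain : (List.finRange n).Chain' (pathGraph n).Adj := by
    rw [List.Chain', List.isChain_iff_getElem]
    intro i hi
    simp only [List.length_finRange] at hi
    simp only [List.getElem_finRange]
    rw [pathGraph_adj]
    simp
  obtain ⟨x, y, w, hw, hwl⟩ := exists_path_of_list (G := pathGraph n) (List.finRange n)
    (by
      intro hnil
      have := congrArg List.length hnil
      simp at this
      omega) hchain (List.nodup_finRange n)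
  exact ⟨x, y, w, hw, by simpa using hwl⟩


/-! ### Intermediate value property for walks in path graphs -/

lemma pathGraph_walk_mem {m : ℕ} : ∀ {α β : Fin m} (w : (SimpleGraph.pathGraph m).Walk α β)
    (γ : ℕ), min (α : ℕ) (β : ℕ) ≤ γ → γ ≤ max (α : ℕ) (β : ℕ) →
    ∃ x ∈ w.support, (x : ℕ) = γ := by
  intro α β w
  induction w with
  | nil =>
    rename_i u
    intro γ h1 h2
    exact ⟨u, by simp, by omega⟩
  | cons h p ih =>
    rename_i x y z
    intro γ h1 h2
    rw [pathGraph_adj] at h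
    by_cases hcase : min (y : ℕ) (z : ℕ) ≤ γ ∧ γ ≤ max (y : ℕ) (z : ℕ)
    · obtain ⟨t, ht, htv⟩ := ih γ hcase.1 hcase.2
      exact ⟨t, by simp [ht], htv⟩
    · refine ⟨x, by simp, ?_⟩
      omega

/-! ### A connected graph embeddable in a path graph is a path graph -/

lemma iso_pathGraph_of_connected_emb {W : Type*} [Fintype W] [DecidableEq W]
    {H : SimpleGraph W} (hc : H.Connected) {m : ℕ} (f : H ↪g SimpleGraph.pathGraph m) :
    Nonempty (H ≃g SimpleGraph.pathGraph (Fintype.card W)) := by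
  classical
  haveI : Nonempty W := hc.nonempty
  set S : Finset ℕ := Finset.univ.image (fun x : W => ((f x : Fin m) : ℕ)) with hS
  have hSne : S.Nonempty := Finset.Nonempty.image Finset.univ_nonempty _
  set mn := S.min' hSne with hmn
  set mx := S.max' hSne with hmx
  have hval : Function.Injective (fun x : W => ((f x : Fin m) : ℕ)) := by
    intro x y h
    exact f.injective (Fin.ext h)
  have hcard : S.card = Fintype.card W := by
    rw [hS, Finset.card_image_of_injective _ hval, Finset.card_univ]
  have hmemS : ∀ x : W, ((f x : Fin m) : ℕ) ∈ S := by
    intro x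
    rw [hS]
    exact Finset.mem_image.mpr ⟨x, Finset.mem_univ _, rfl⟩
  have hbnd : ∀ x : W, mn ≤ ((f x : Fin m) : ℕ) ∧ ((f x : Fin m) : ℕ) ≤ mx := fun x =>
    ⟨S.min'_le _ (hmemS x), S.le_max' _ (hmemS x)⟩
  have hiv : ∀ γ, mn ≤ γ → γ ≤ mx → γ ∈ S := by
    intro γ h1 h2
    obtain ⟨x0, _, hx0⟩ := Finset.mem_image.mp (S.min'_mem hSne)
    obtain ⟨x1, _, hx1⟩ := Finset.mem_image.mp (S.max'_mem hSne)
    obtain ⟨w⟩ := hc.preconnected x0 x1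
    have e0 : ((f.toHom x0 : Fin m) : ℕ) = ((f x0 : Fin m) : ℕ) := rfl
    have e1 : ((f.toHom x1 : Fin m) : ℕ) = ((f x1 : Fin m) : ℕ) := rfl
    obtain ⟨t, ht, htv⟩ := pathGraph_walk_mem (w.map f.toHom) γ
      (by rw [e0, e1, hx0, hx1, ← hmn, ← hmx]; omega)
      (by rw [e0, e1, hx0, hx1, ← hmn, ← hmx]; omega)
    rw [Walk.support_map] at ht
    obtain ⟨x', _, hx'⟩ := List.mem_map.mp ht
    rw [hS]
    refine Finset.mem_image.mpr ⟨x', Finset.mem_univ _, ?_⟩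
    exact (congrArg Fin.val hx').trans htv
  have hScard2 : mx + 1 - mn = Fintype.card W := by
    have hsub : S ⊆ Finset.Icc mn mx := fun γ hγ =>
      Finset.mem_Icc.mpr ⟨S.min'_le _ hγ, S.le_max' _ hγ⟩
    have hsup : Finset.Icc mn mx ⊆ S := fun γ hγ => by
      rw [Finset.mem_Icc] at hγ
      exact hiv γ hγ.1 hγ.2
    have hEq : S = Finset.Icc mn mx := Finset.Subset.antisymm hsub hsup
    rw [← hcard, hEq, Nat.card_Icc]
  let e : W → Fin (Fintype.card W) := fun x =>
    ⟨((f x : Fin m) : ℕ) - mn, by have := hbnd x; omega⟩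
  have einj : Function.Injective e := by
    intro x y h
    apply hval
    have h2 := congrArg Fin.val h
    simp only [e] at h2
    have hx := hbnd x
    have hy := hbnd y
    simp only
    omega
  have esurj : Function.Surjective e := by
    rintro ⟨k, hk⟩
    have hγ : mn + k ∈ S := hiv _ (by omega) (by omega)
    obtain ⟨x, _, hx⟩ := Finset.mem_image.mp hγ
    refine ⟨x, ?_⟩
    ext
    simp only [e]
    omega
  refine ⟨⟨Equiv.ofBijective e ⟨einj, esurj⟩, ?_⟩⟩
  intro x y
  rw [pathGraph_adj, ← f.map_rel_iff, pathGraph_adj]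
  have hx := hbnd x
  have hy := hbnd y
  simp only [Equiv.ofBijective_apply, e]
  constructor
  · intro hcase
    change ((f x : ℕ) - mn) + 1 = (f y : ℕ) - mn ∨ ((f y : ℕ) - mn) + 1 = (f x : ℕ) - mn at hcase
    omega
  · intro hcase
    show ((f x : ℕ) - mn) + 1 = (f y : ℕ) - mn ∨ ((f y : ℕ) - mn) + 1 = (f x : ℕ) - mn
    omega

/-! ### Components induce connected graphs -/

lemma connected_induce_supp {G : SimpleGraph V} (c : G.ConnectedComponent) :
    (G.induce c.supp).Connected := by
  classical
  obtain ⟨v0, hv0⟩ := c.exists_rep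
  haveI : Nonempty c.supp := ⟨⟨v0, hv0⟩⟩
  refine ⟨?_⟩
  rintro x y
  have hx : G.connectedComponentMk x.val = c := x.prop
  have hy : G.connectedComponentMk y.val = c := y.prop
  have hre : G.Reachable x.val y.val := ConnectedComponent.exact (hx.trans hy.symm)
  obtain ⟨w⟩ := hre
  have hsupp : ∀ z ∈ w.support, z ∈ c.supp := by
    intro z hz
    have hrz : G.Reachable x.val z := ⟨w.takeUntil z hz⟩
    have : G.connectedComponentMk z = G.connectedComponentMk x.val :=
      ConnectedComponent.sound hrz.symm
    rw [ConnectedComponent.mem_supp_iff, this, hx]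
  have := reachable_induce w hsupp ⟨x.val, x.prop⟩ ⟨y.val, y.prop⟩ rfl rfl
  exact this

/-! ### Linear forests are closed under induced subgraphs -/

lemma isLinearForest_of_emb {V W : Type*} [Fintype V] [DecidableEq V]
    {H : SimpleGraph V} {G : SimpleGraph W} (f : H ↪g G) (hG : IsLinearForest G) :
    IsLinearForest H := by
  classical
  intro c
  obtain ⟨x0, hx0⟩ := c.exists_rep
  set d := G.connectedComponentMk (f x0) with hd
  obtain ⟨mD, ⟨φ⟩⟩ := hG d
  have hmem : ∀ x : c.supp, f x.val ∈ d.supp := by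
    intro x
    have hx : H.connectedComponentMk x.val = c := x.prop
    have hre : H.Reachable x.val x0 := ConnectedComponent.exact (hx.trans hx0.symm)
    have hre2 : G.Reachable (f x.val) (f x0) := hre.map f.toHom
    rw [ConnectedComponent.mem_supp_iff, hd]
    exact ConnectedComponent.sound hre2
  let g : H.induce c.supp ↪g G.induce d.supp :=
    ⟨⟨fun x => ⟨f x.val, hmem x⟩,
      fun x y h => Subtype.ext (f.injective (congrArg Subtype.val h))⟩,
      fun {x y} => f.map_rel_iff⟩
  have emb : H.induce c.supp ↪g SimpleGraph.pathGraph mD := (φ.toEmbedding).comp g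
  haveI : Fintype c.supp := Fintype.ofFinite _
  have hcon : (H.induce c.supp).Connected := connected_induce_supp c
  obtain ⟨ψ⟩ := iso_pathGraph_of_connected_emb hcon emb
  exact ⟨Fintype.card c.supp, ⟨ψ⟩⟩

/-! ### A linear forest embeds into a long enough path graph -/

lemma exists_emb_pathGraph {V : Type*} [Fintype V] {F : SimpleGraph V}
    (hF : IsLinearForest F) : ∃ M, Nonempty (F ↪g SimpleGraph.pathGraph M) := by
  classical
  haveI : Fintype F.ConnectedComponent := Fintype.ofFinite _
  choose m hφ using hF
  let ψ : ∀ c, F.induce c.supp ≃g SimpleGraph.pathGraph (m c) := fun c => (hφ c).some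
  have hm1 : ∀ c : F.ConnectedComponent, 1 ≤ m c := by
    intro c
    obtain ⟨x, hx⟩ := c.exists_rep
    have : Nonempty (Fin (m c)) := ⟨ψ c ⟨x, hx⟩⟩
    obtain ⟨i⟩ := this
    exact i.pos
  set e := Fintype.equivFin F.ConnectedComponent with he
  set O : F.ConnectedComponent → ℕ :=
    fun c => ∑ c' ∈ Finset.univ.filter (fun c' => e c' < e c), (m c' + 1) with hO
  set M := ∑ c' : F.ConnectedComponent, (m c' + 1) with hM
  have hOle : ∀ c, O c + m c + 1 ≤ M := by
    intro c
    have hnotmem : c ∉ Finset.univ.filter (fun c' => e c' < e c) := by simp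
    have h1 : O c + (m c + 1) = ∑ c' ∈ insert c (Finset.univ.filter (fun c' => e c' < e c)),
        (m c' + 1) := by
      rw [Finset.sum_insert hnotmem]
      simp only [hO]
      omega
    have h2 : ∑ c' ∈ insert c (Finset.univ.filter (fun c' => e c' < e c)), (m c' + 1) ≤ M := by
      rw [hM]
      exact Finset.sum_le_sum_of_subset (Finset.subset_univ _)
    omega
  have hOlt : ∀ c c', e c < e c' → O c + m c + 1 ≤ O c' := by
    intro c c' hlt
    have hnotmem : c ∉ Finset.univ.filter (fun x => e x < e c) := by simp
    have hsub : insert c (Finset.univ.filter (fun x => e x < e c)) ⊆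
        Finset.univ.filter (fun x => e x < e c') := by
      intro x hx
      rcases Finset.mem_insert.mp hx with rfl | hx
      · simp [hlt]
      · simp only [Finset.mem_filter, Finset.mem_univ, true_and] at hx ⊢
        exact lt_trans hx hlt
    have h1 : O c + (m c + 1) = ∑ x ∈ insert c (Finset.univ.filter (fun x => e x < e c)),
        (m x + 1) := by
      rw [Finset.sum_insert hnotmem]
      simp only [hO]
      omega
    have h2 : ∑ x ∈ insert c (Finset.univ.filter (fun x => e x < e c)), (m x + 1) ≤ O c' :=
      Finset.sum_le_sum_of_subset hsub
    omega
  let val : V → ℕ := fun x => O (F.connectedComponentMk x) +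
    ((ψ (F.connectedComponentMk x)) ⟨x, rfl⟩ : Fin _).val
  have key : ∀ (x : V) (c : F.ConnectedComponent) (h : F.connectedComponentMk x = c),
      val x = O c + ((ψ c) ⟨x, h⟩ : Fin _).val := by
    intro x c h
    subst h
    rfl
  have hvlt : ∀ x, val x < O (F.connectedComponentMk x) + m (F.connectedComponentMk x) := by
    intro x
    have := ((ψ (F.connectedComponentMk x)) ⟨x, rfl⟩).isLt
    simp only [val]
    omega
  have hvM : ∀ x, val x < M := by
    intro x
    have h1 := hvlt x
    have h2 := hOle (F.connectedComponentMk x)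
    omega
  -- different components are far apart
  have hfar : ∀ x y : V, F.connectedComponentMk x ≠ F.connectedComponentMk y →
      val x + 2 ≤ val y ∨ val y + 2 ≤ val x := by
    intro x y hne
    have hene : e (F.connectedComponentMk x) ≠ e (F.connectedComponentMk y) :=
      fun h => hne (e.injective h)
    rcases lt_or_gt_of_ne hene with hlt | hlt
    · left
      have h1 := hvlt x
      have h2 := hOlt _ _ hlt
      have h3 : O (F.connectedComponentMk y) ≤ val y := by simp only [val]; omega
      omega
    · right
      have h1 := hvlt y
      have h2 := hOlt _ _ hlt
      have h3 : O (F.connectedComponentMk x) ≤ val x := by simp only [val]; omega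
      omega
  refine ⟨M, ⟨⟨⟨fun x => ⟨val x, hvM x⟩, ?_⟩, ?_⟩⟩⟩
  · -- injectivity
    intro x y h
    have hv : val x = val y := congrArg Fin.val h
    by_cases hc : F.connectedComponentMk x = F.connectedComponentMk y
    · have hx := key x _ rfl
      have hy := key y _ hc.symm
      rw [hx, hy] at hv
      have : ((ψ (F.connectedComponentMk x)) ⟨x, rfl⟩) =
          ((ψ (F.connectedComponentMk x)) ⟨y, hc.symm⟩) := Fin.ext (by omega)
      have := (ψ (F.connectedComponentMk x)).injective this
      exact congrArg Subtype.val this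
    · have := hfar x y hc
      omega
  · -- adjacency
    intro x y
    by_cases hc : F.connectedComponentMk x = F.connectedComponentMk y
    · have hx := key x _ rfl
      have hy := key y _ hc.symm
      have hAdj : F.Adj x y ↔ (SimpleGraph.pathGraph (m (F.connectedComponentMk x))).Adj
          ((ψ (F.connectedComponentMk x)) ⟨x, rfl⟩) ((ψ (F.connectedComponentMk x)) ⟨y, hc.symm⟩) := by
        rw [(ψ (F.connectedComponentMk x)).map_rel_iff]
        exact Iff.rfl
      rw [hAdj, pathGraph_adj, pathGraph_adj]
      show (val x + 1 = val y ∨ val y + 1 = val x) ↔ _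
      constructor
      · intro hcase
        omega
      · intro hcase
        omega
    · have hnadj : ¬ F.Adj x y := fun hA => hc (ConnectedComponent.sound hA.reachable)
      have hfar2 := hfar x y hc
      rw [pathGraph_adj]
      show (val x + 1 = val y ∨ val y + 1 = val x) ↔ _
      constructor
      · intro hcase
        exfalso
        omega
      · intro hA
        exact absurd hA hnadj

/-! ### Path graphs are linear forests -/

lemma isLinearForest_pathGraph (n : ℕ) : IsLinearForest (SimpleGraph.pathGraph n) := by
  intro c
  cases n with
  | zero =>
    obtain ⟨x, _⟩ := c.exists_rep
    exact x.elim0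
  | succ k =>
    have hconn := pathGraph_connected k
    obtain ⟨v0, hv0⟩ := c.exists_rep
    have hsupp : c.supp = Set.univ := by
      ext x
      simp only [ConnectedComponent.mem_supp_iff, Set.mem_univ, iff_true]
      rw [← hv0]
      exact ConnectedComponent.sound (hconn.preconnected x v0)
    rw [hsupp]
    exact ⟨k + 1, ⟨(SimpleGraph.pathGraph (k+1)).induceUnivIso⟩⟩

/-! ### Paths in a linear forest live in a path component -/

lemma linearForest_path_bound {V : Type*} [Fintype V] [DecidableEq V] {G : SimpleGraph V}
    (hG : IsLinearForest G) {u v : V} (q : G.Walk u v) (hq : q.IsPath) :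
    ∃ m', q.length + 1 ≤ m' ∧ Nonempty (SimpleGraph.pathGraph m' ↪g G) := by
  classical
  set c := G.connectedComponentMk u with hc
  obtain ⟨m', ⟨φ⟩⟩ := hG c
  haveI : Fintype c.supp := Fintype.ofFinite _
  have hsupp : ∀ z ∈ q.support, z ∈ c.supp := by
    intro z hz
    have hre : G.Reachable u z := ⟨q.takeUntil z hz⟩
    rw [ConnectedComponent.mem_supp_iff, hc]
    exact ConnectedComponent.sound hre.symm
  have hcard : q.length + 1 ≤ Fintype.card c.supp := by
    have hnodup : (q.support.pmap (fun z hz => (⟨z, hz⟩ : c.supp)) hsupp).Nodup := by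
      refine List.Nodup.pmap ?_ hq.support_nodup
      intro a ha b hb h
      exact congrArg Subtype.val h
    have hlen : (q.support.pmap (fun z hz => (⟨z, hz⟩ : c.supp)) hsupp).length
        = q.support.length := List.length_pmap
    have hle := hnodup.length_le_card
    rw [hlen, q.length_support] at hle
    exact hle
  have hcardm : Fintype.card c.supp = m' := by
    have h1 := Fintype.card_congr φ.toEquiv
    simpa using h1
  exact ⟨m', by omega,
    ⟨(SimpleGraph.Embedding.induce (c.supp : Set V)).comp φ.symm.toEmbedding⟩⟩


lemma wordData_of_isBPG {n : ℕ} {G : SimpleGraph (Fin n)} (h : IsBPG G) :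
    Nonempty (WordData G) := by
  obtain ⟨k, v, w, hvw⟩ := h
  refine ⟨⟨fun x => ((v.symm x : Fin (Fintype.card (Fin n))) : ℕ),
    fun x => ((w (v.symm x) : Fin k) : ℕ), ?_, ?_⟩⟩
  · intro x y hxy
    exact v.symm.injective (Fin.ext hxy)
  · intro x y
    rcases lt_trichotomy (v.symm x) (v.symm y) with hlt | heq | hgt
    · have h1 := hvw _ _ hlt
      rw [v.apply_symm_apply, v.apply_symm_apply] at h1
      have hval : ((v.symm x : Fin _) : ℕ) < ((v.symm y : Fin _) : ℕ) := hlt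
      constructor
      · intro hA
        exact Or.inl ⟨hval, h1.mp hA⟩
      · rintro (⟨_, h2⟩ | ⟨hpos, _⟩)
        · exact h1.mpr h2
        · omega
    · have hxy : x = y := by
        have := congrArg v heq
        rwa [v.apply_symm_apply, v.apply_symm_apply] at this
      subst hxy
      simp
    · have h1 := hvw _ _ hgt
      rw [v.apply_symm_apply, v.apply_symm_apply] at h1
      have hval : ((v.symm y : Fin _) : ℕ) < ((v.symm x : Fin _) : ℕ) := hgt
      constructor
      · intro hA
        exact Or.inr ⟨hval, h1.mp hA.symm⟩
      · rintro (⟨hpos, _⟩ | ⟨_, h2⟩)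
        · omega
        · exact (h1.mpr h2).symm

end PNMCAux

open PNMCAux

/-- Complete bipartite graphs and linear forests are the only two minimal
hereditary subclasses of bipartite permutation graphs of unbounded path number. -/
theorem path_number_minimal_classes (X : GClass) (hX : Hereditary X)
    (hBP : ∀ n (G : SimpleGraph (Fin n)), G ∈ X n → IsBPG G) :
    (¬ PathNumBdd X ∧
      ∀ Y : GClass, Hereditary Y → (∀ n, Y n ⊆ X n) → Y ≠ X → PathNumBdd Y) ↔
    ((∀ n, X n = {G | IsCompleteBipartite G}) ∨
      (∀ n, X n = {G | IsLinearForest G})) := by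
  classical
  constructor
  · rintro ⟨hUnb, hMin⟩
    have hLong : ∀ c : ℕ, ∃ (n : ℕ) (G : SimpleGraph (Fin n)), G ∈ X n ∧
        ∃ (u v : Fin n) (p : G.Walk u v), p.IsPath ∧ c < p.length + 1 := by
      intro c
      by_contra hno
      push_neg at hno
      refine hUnb ⟨c, ?_⟩
      intro n G hG u v p hp
      exact hno n G hG u v p hp
    by_cases hCB : (fun n => X n ∩ {G | IsCompleteBipartite G}) = X
    · left
      intro n
      apply Set.Subset.antisymm
      · intro G hG
        have h1 := congrFun hCB n
        rw [← h1] at hG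
        exact hG.2
      · intro G hGcb
        obtain ⟨α, β, ⟨isoF⟩⟩ := hGcb
        obtain ⟨n', G', hG', u, v, p, hp, hlen⟩ := hLong (2 * (α + β) + 2)
        have hG'cb : IsCompleteBipartite G' := by
          have h1 := congrFun hCB n'
          rw [← h1] at hG'
          exact hG'.2
        obtain ⟨a', b', ⟨ψ⟩⟩ := hG'cb
        have hq' : (p.map ψ.toHom).IsPath := Walk.map_isPath_of_injective ψ.injective hp
        have hlen' : 2 * (α + β) + 2 ≤ (p.map ψ.toHom).length + 1 := by
          rw [Walk.length_map]; omega
        obtain ⟨hA, hB⟩ := cb_walk_side_bound (p.map ψ.toHom) hq' hlen'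
        have hembF : G ↪g G' :=
          ψ.symm.toEmbedding.comp ((cbgMonoEmb (by omega) (by omega)).comp isoF.toEmbedding)
        exact hX n' n G' G hG' ⟨hembF⟩
    · by_cases hLF : (fun n => X n ∩ {G | IsLinearForest G}) = X
      · right
        intro n
        apply Set.Subset.antisymm
        · intro G hG
          have h1 := congrFun hLF n
          rw [← h1] at hG
          exact hG.2
        · intro G hGlf
          obtain ⟨M, ⟨embF⟩⟩ := exists_emb_pathGraph hGlf
          obtain ⟨n', G', hG', u, v, p, hp, hlen⟩ := hLong M
          have hG'lf : IsLinearForest G' := by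
            have h1 := congrFun hLF n'
            rw [← h1] at hG'
            exact hG'.2
          obtain ⟨m', hm', ⟨embP⟩⟩ := linearForest_path_bound hG'lf p hp
          have hMm : M ≤ m' := by omega
          exact hX n' n G' G hG' ⟨embP.comp ((pathGraph_emb_mono hMm).comp embF)⟩
      · exfalso
        have hYL : PathNumBdd (fun n => X n ∩ {G | IsLinearForest G}) := by
          refine hMin _ ?_ (fun n => Set.inter_subset_left) hLF
          intro n m G H hGm hemb
          obtain ⟨e⟩ := hemb
          exact ⟨hX n m G H hGm.1 ⟨e⟩, isLinearForest_of_emb e hGm.2⟩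
        have hYC : PathNumBdd (fun n => X n ∩ {G | IsCompleteBipartite G}) := by
          refine hMin _ ?_ (fun n => Set.inter_subset_left) hCB
          intro n m G H hGm hemb
          obtain ⟨e⟩ := hemb
          refine ⟨hX n m G H hGm.1 ⟨e⟩, ?_⟩
          obtain ⟨a, b, ⟨iso⟩⟩ := hGm.2
          exact isCompleteBipartite_of_emb (iso.toEmbedding.comp e)
        obtain ⟨c₁, hc₁⟩ := hYL
        obtain ⟨c₂, hc₂⟩ := hYC
        apply hUnb
        refine ⟨(2 * (c₁ + 2) + 1) * (4 * (c₂ + 2) + 1), ?_⟩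
        intro n G hG u v q hq
        obtain ⟨wd⟩ := wordData_of_isBPG (hBP n G hG)
        refine star_bound wd (a := c₂ + 2) (p := c₁ + 2) ⟨fun f => ?_⟩ ⟨fun f => ?_⟩ q hq
        · -- no big biclique
          have hmem : cbgF (c₂+2) (c₂+2) ∈ X ((c₂+2) + (c₂+2)) :=
            hX n ((c₂+2)+(c₂+2)) G (cbgF (c₂+2) (c₂+2)) hG
              ⟨f.comp (cbgF_iso (c₂+2) (c₂+2)).toEmbedding⟩
          have hmem2 : cbgF (c₂+2) (c₂+2) ∈
              X ((c₂+2)+(c₂+2)) ∩ {G | IsCompleteBipartite G} :=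
            ⟨hmem, isCompleteBipartite_cbgF (c₂+2) (c₂+2)⟩
          obtain ⟨x, y, w, hw, hwl⟩ := cbgF_long_path (c := c₂+2) (by omega)
          have := hc₂ _ _ hmem2 x y w hw
          omega
        · -- no long induced path
          have hmem : SimpleGraph.pathGraph (c₁+2) ∈ X (c₁+2) :=
            hX n (c₁+2) G _ hG ⟨f⟩
          have hmem2 : SimpleGraph.pathGraph (c₁+2) ∈
              X (c₁+2) ∩ {G | IsLinearForest G} :=
            ⟨hmem, isLinearForest_pathGraph (c₁+2)⟩
          obtain ⟨x, y, w, hw, hwl⟩ := pathGraph_long_path (c₁+2) (by omega)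
          have := hc₁ _ _ hmem2 x y w hw
          omega
  · rintro (hcb | hlf)
    · constructor
      · rintro ⟨c, hc⟩
        have hmem : cbgF (c+1) (c+1) ∈ X ((c+1)+(c+1)) := by
          rw [hcb ((c+1)+(c+1))]
          exact isCompleteBipartite_cbgF (c+1) (c+1)
        obtain ⟨x, y, w, hw, hwl⟩ := cbgF_long_path (c := c+1) (by omega)
        have := hc _ _ hmem x y w hw
        omega
      · intro Y hY hsub hne
        have hexn : ∃ n₀, Y n₀ ≠ X n₀ := by
          by_contra hall
          push_neg at hall
          exact hne (funext hall)
        obtain ⟨n₀, hn₀⟩ := hexn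
        have hexF : ∃ F, F ∈ X n₀ ∧ F ∉ Y n₀ := by
          by_contra hnoF
          push_neg at hnoF
          exact hn₀ (Set.Subset.antisymm (hsub n₀) hnoF)
        obtain ⟨F, hFX, hFY⟩ := hexF
        have hFcb : IsCompleteBipartite F := by rw [hcb n₀] at hFX; exact hFX
        obtain ⟨α, β, ⟨isoF⟩⟩ := hFcb
        refine ⟨2 * (α + β) + 2, ?_⟩
        intro n G hG u v q hq
        by_contra hlong
        push_neg at hlong
        have hGX : G ∈ X n := hsub n hG
        have hGcb : IsCompleteBipartite G := by rw [hcb n] at hGX; exact hGX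
        obtain ⟨a', b', ⟨ψ⟩⟩ := hGcb
        have hq' : (q.map ψ.toHom).IsPath := Walk.map_isPath_of_injective ψ.injective hq
        have hlen' : 2 * (α + β) + 2 ≤ (q.map ψ.toHom).length + 1 := by
          rw [Walk.length_map]; omega
        obtain ⟨hA, hB⟩ := cb_walk_side_bound (q.map ψ.toHom) hq' hlen'
        have hembF : F ↪g G :=
          ψ.symm.toEmbedding.comp ((cbgMonoEmb (by omega) (by omega)).comp isoF.toEmbedding)
        exact hFY (hY n n₀ G F hG ⟨hembF⟩)
    · constructor
      · rintro ⟨c, hc⟩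
        have hmem : SimpleGraph.pathGraph (c+1) ∈ X (c+1) := by
          rw [hlf (c+1)]
          exact isLinearForest_pathGraph (c+1)
        obtain ⟨x, y, w, hw, hwl⟩ := pathGraph_long_path (c+1) (by omega)
        have := hc _ _ hmem x y w hw
        omega
      · intro Y hY hsub hne
        have hexn : ∃ n₀, Y n₀ ≠ X n₀ := by
          by_contra hall
          push_neg at hall
          exact hne (funext hall)
        obtain ⟨n₀, hn₀⟩ := hexn
        have hexF : ∃ F, F ∈ X n₀ ∧ F ∉ Y n₀ := by
          by_contra hnoF
          push_neg at hnoF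
          exact hn₀ (Set.Subset.antisymm (hsub n₀) hnoF)
        obtain ⟨F, hFX, hFY⟩ := hexF
        have hFlf : IsLinearForest F := by rw [hlf n₀] at hFX; exact hFX
        obtain ⟨M, ⟨embF⟩⟩ := exists_emb_pathGraph hFlf
        refine ⟨M + 1, ?_⟩
        intro n G hG u v q hq
        by_contra hlong
        push_neg at hlong
        have hGX : G ∈ X n := hsub n hG
        have hGlf : IsLinearForest G := by rw [hlf n] at hGX; exact hGX
        obtain ⟨m', hm', ⟨embP⟩⟩ := linearForest_path_bound hGlf q hq
        have hMm : M ≤ m' := by omega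
        exact hFY (hY n n₀ G F hG ⟨embP.comp ((pathGraph_emb_mono hMm).comp embF)⟩)
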